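/- For a real-valued logic L the following are equivalent: (i) L satisfies both P1 and P2; (ii) L is classical logic, i.e. L = Taut({0,1},*); (iii) the two-element algebra {0,1} is the unique algebra of truth values inducing L, i.e. for every continuous t-norm *' and every algebra of truth values T' for *' with Taut(T',*') = L one has T' = {0,1}. -/

import Mathlib

open Set

noncomputable section

/-- The real unit interval `[0,1]` as a subset of `ℝ`. -/
def I01 : Set ℝ := Set.Icc 0 1

/-- A continuous t-norm on `[0,1]`. -/
structure ContTNorm where
  mul : ℝ → ℝ → ℝ
  maps_to : ∀ x ∈ I01, ∀ y ∈ I01, mul x y ∈ I01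
  continuousOn : ContinuousOn (fun p : ℝ × ℝ => mul p.1 p.2) (I01 ×ˢ I01)
  assoc : ∀ x ∈ I01, ∀ y ∈ I01, ∀ z ∈ I01, mul (mul x y) z = mul x (mul y z)
  comm : ∀ x ∈ I01, ∀ y ∈ I01, mul x y = mul y x
  mono : ∀ a ∈ I01, ∀ b ∈ I01, ∀ c ∈ I01, b ≤ c → mul a b ≤ mul a c
  one_mul' : ∀ x ∈ I01, mul 1 x = x

/-- The residuum of a t-norm: `x →* y := sup { c ∈ [0,1] | x * c ≤ y }`. -/
def resid (t : ContTNorm) (x y : ℝ) : ℝ :=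
  sSup {c | c ∈ I01 ∧ t.mul x c ≤ y}

/-- An algebra of truth values for the t-norm `t`: a subset of `[0,1]` containing
`0` and `1` and closed under `t.mul` and its residuum. -/
structure TruthAlg (t : ContTNorm) where
  carrier : Set ℝ
  subset : carrier ⊆ I01
  zero_mem : (0:ℝ) ∈ carrier
  one_mem : (1:ℝ) ∈ carrier
  mul_mem : ∀ x ∈ carrier, ∀ y ∈ carrier, t.mul x y ∈ carrier
  resid_mem : ∀ x ∈ carrier, ∀ y ∈ carrier, resid t x y ∈ carrier

/-- Propositional formulas over countably many variables with `&`, `→`, `⊥`. -/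
inductive Formula : Type
  | var : ℕ → Formula
  | bot : Formula
  | conj : Formula → Formula → Formula
  | impl : Formula → Formula → Formula

/-- `α ↔ β := (α → β) & (β → α)`. -/
def Formula.iff (a b : Formula) : Formula := .conj (.impl a b) (.impl b a)

/-- The valuation determined by an assignment `v` of reals to the variables. -/
def eval (t : ContTNorm) (v : ℕ → ℝ) : Formula → ℝ
  | .var i => v i
  | .bot => 0
  | .conj a b => t.mul (eval t v a) (eval t v b)
  | .impl a b => resid t (eval t v a) (eval t v b)

/-- A valuation into `(T, t)` is (identified with) an assignment of values of `T`
to the propositional variables. -/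
def IsValuation (t : ContTNorm) (T : TruthAlg t) (v : ℕ → ℝ) : Prop :=
  ∀ i, v i ∈ T.carrier

/-- The logic induced by `(T, t)`: all formulas true to degree 1 under every valuation. -/
def Taut (t : ContTNorm) (T : TruthAlg t) : Set Formula :=
  {α | ∀ v : ℕ → ℝ, IsValuation t T v → eval t v α = 1}

/-- Principle P1. -/
def P1 (L : Set Formula) : Prop :=
  ∀ (t : ContTNorm) (T : TruthAlg t), Taut t T = L →
    ∀ α β : Formula,
      (Formula.iff α β ∈ L ↔
        ∀ v : ℕ → ℝ, IsValuation t T v → (eval t v α = 1 ↔ eval t v β = 1))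

/-- Principle P2. -/
def P2 (L : Set Formula) : Prop :=
  ∀ (t : ContTNorm) (T : TruthAlg t), Taut t T = L →
    ∀ v w : ℕ → ℝ, IsValuation t T v → IsValuation t T w → v ≠ w →
      ∃ α : Formula, 0 < eval t v α ∧ eval t w α = 0

/-- The Gödel t-norm: minimum. -/
def minT : ContTNorm where
  mul := fun x y => min x y
  maps_to := by
    rintro x ⟨hx0, hx1⟩ y ⟨hy0, hy1⟩
    exact ⟨le_min hx0 hy0, min_le_of_left_le hx1⟩
  continuousOn := (continuous_fst.min continuous_snd).continuousOn
  assoc := fun x _ y _ z _ => min_assoc x y z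
  comm := fun x _ y _ => min_comm x y
  mono := fun a _ b _ c _ h => min_le_min le_rfl h
  one_mul' := by rintro x ⟨hx0, hx1⟩; exact min_eq_right hx1

/-- The Łukasiewicz t-norm: `x ⊙ y = max 0 (x + y - 1)`. -/
def lukT : ContTNorm where
  mul := fun x y => max 0 (x + y - 1)
  maps_to := by
    rintro x ⟨hx0, hx1⟩ y ⟨hy0, hy1⟩
    exact ⟨le_max_left _ _, max_le zero_le_one (by linarith)⟩
  continuousOn :=
    (continuous_const.max ((continuous_fst.add continuous_snd).sub continuous_const)).continuousOn
  assoc := by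
    rintro x ⟨hx0, hx1⟩ y ⟨hy0, hy1⟩ z ⟨hz0, hz1⟩
    simp only [max_def]
    split_ifs <;> linarith
  comm := by intro x _ y _; rw [add_comm]
  mono := by
    rintro a _ b _ c _ h
    exact max_le_max le_rfl (by linarith)
  one_mul' := by
    rintro x ⟨hx0, hx1⟩
    rw [show (1:ℝ) + x - 1 = x by ring, max_eq_right hx0]

/-- The product t-norm: ordinary multiplication. -/
def prodT : ContTNorm where
  mul := fun x y => x * y
  maps_to := by
    rintro x ⟨hx0, hx1⟩ y ⟨hy0, hy1⟩
    exact ⟨mul_nonneg hx0 hy0, by nlinarith⟩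
  continuousOn := (continuous_fst.mul continuous_snd).continuousOn
  assoc := fun x _ y _ z _ => mul_assoc x y z
  comm := fun x _ y _ => mul_comm x y
  mono := by rintro a ⟨ha0, _⟩ b _ c _ h; exact mul_le_mul_of_nonneg_left h ha0
  one_mul' := fun x _ => one_mul x

lemma ContTNorm.mul_zero' (t : ContTNorm) {x : ℝ} (hx : x ∈ I01) : t.mul x 0 = 0 := by
  have h01 : (0:ℝ) ∈ I01 := ⟨le_rfl, zero_le_one⟩
  have h11 : (1:ℝ) ∈ I01 := ⟨zero_le_one, le_rfl⟩
  have h1 : t.mul x 0 = t.mul 0 x := t.comm x hx 0 h01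
  have h2 : t.mul 0 x ≤ t.mul 0 1 := t.mono 0 h01 x hx 1 h11 hx.2
  have h3 : t.mul 0 1 = t.mul 1 0 := t.comm 0 h01 1 h11
  have h4 : t.mul 1 0 = 0 := t.one_mul' 0 h01
  have h5 : t.mul x 0 ∈ I01 := t.maps_to x hx 0 h01
  rw [h3, h4] at h2
  rw [h1] at h5 ⊢
  exact le_antisymm h2 h5.1

lemma resid_mem_I01 (t : ContTNorm) {x y : ℝ} (hx : x ∈ I01) (hy : y ∈ I01) :
    resid t x y ∈ I01 := by
  have h01 : (0:ℝ) ∈ I01 := ⟨le_rfl, zero_le_one⟩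
  have h0 : (0:ℝ) ∈ {c | c ∈ I01 ∧ t.mul x c ≤ y} :=
    ⟨h01, by rw [t.mul_zero' hx]; exact hy.1⟩
  have hbdd : BddAbove {c | c ∈ I01 ∧ t.mul x c ≤ y} := ⟨1, fun c hc => hc.1.2⟩
  constructor
  · exact le_csSup hbdd h0
  · exact csSup_le ⟨0, h0⟩ fun c hc => hc.1.2

/-- The full algebra of truth values `[0,1]` for a t-norm `t`. -/
def fullAlg (t : ContTNorm) : TruthAlg t where
  carrier := I01
  subset := le_rfl
  zero_mem := ⟨le_rfl, zero_le_one⟩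
  one_mem := ⟨zero_le_one, le_rfl⟩
  mul_mem := t.maps_to
  resid_mem := fun _ hx _ hy => resid_mem_I01 t hx hy

lemma resid_eq_one_of_le (t : ContTNorm) {x y : ℝ} (hx : x ∈ I01) (hy : y ∈ I01)
    (hxy : x ≤ y) : resid t x y = 1 := by
  have h11 : (1:ℝ) ∈ I01 := ⟨zero_le_one, le_rfl⟩
  have hmul : t.mul x 1 = x := by rw [t.comm x hx 1 h11]; exact t.one_mul' x hx
  have h1 : (1:ℝ) ∈ {c | c ∈ I01 ∧ t.mul x c ≤ y} := ⟨h11, by rw [hmul]; exact hxy⟩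
  have hbdd : BddAbove {c | c ∈ I01 ∧ t.mul x c ≤ y} := ⟨1, fun c hc => hc.1.2⟩
  exact le_antisymm (csSup_le ⟨1, h1⟩ fun c hc => hc.1.2) (le_csSup hbdd h1)

lemma resid_one_zero (t : ContTNorm) : resid t 1 0 = 0 := by
  have : {c | c ∈ I01 ∧ t.mul 1 c ≤ 0} = {0} := by
    ext c
    constructor
    · rintro ⟨hc, hle⟩
      have := t.one_mul' c hc
      have := hc.1
      simp only [Set.mem_singleton_iff]
      linarith [this, (t.one_mul' c hc) ▸ hle]
    · rintro rfl
      exact ⟨⟨le_rfl, zero_le_one⟩, by rw [t.mul_zero' ⟨zero_le_one, le_rfl⟩]⟩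
  rw [resid, this, csSup_singleton]

/-- The two-element algebra of truth values `{0,1}`. -/
def boolAlg (t : ContTNorm) : TruthAlg t where
  carrier := {0, 1}
  subset := by
    rintro x (rfl | rfl)
    · exact ⟨le_rfl, zero_le_one⟩
    · exact ⟨zero_le_one, le_rfl⟩
  zero_mem := Or.inl rfl
  one_mem := Or.inr rfl
  mul_mem := by
    have h01 : (0:ℝ) ∈ I01 := ⟨le_rfl, zero_le_one⟩
    have h11 : (1:ℝ) ∈ I01 := ⟨zero_le_one, le_rfl⟩
    rintro x (rfl | rfl) y (rfl | rfl)
    · exact Or.inl (t.mul_zero' h01)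
    · exact Or.inl (by rw [t.comm 0 h01 1 h11]; exact t.mul_zero' h11)
    · exact Or.inl (t.mul_zero' h11)
    · exact Or.inr (t.one_mul' 1 h11)
  resid_mem := by
    have h01 : (0:ℝ) ∈ I01 := ⟨le_rfl, zero_le_one⟩
    have h11 : (1:ℝ) ∈ I01 := ⟨zero_le_one, le_rfl⟩
    rintro x (rfl | rfl) y (rfl | rfl)
    · exact Or.inr (resid_eq_one_of_le t h01 h01 le_rfl)
    · exact Or.inr (resid_eq_one_of_le t h01 h11 zero_le_one)
    · exact Or.inl (resid_one_zero t)
    · exact Or.inr (resid_eq_one_of_le t h11 h11 le_rfl)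

/-- Classical logic: the logic induced by the two-element algebra `{0,1}`
(this is independent of the chosen continuous t-norm). -/
def ClassicalLogic : Set Formula := Taut minT (boolAlg minT)


/- ------------------- Auxiliary lemmas ------------------- -/

lemma h0I : (0:ℝ) ∈ I01 := ⟨le_rfl, zero_le_one⟩
lemma h1I : (1:ℝ) ∈ I01 := ⟨zero_le_one, le_rfl⟩

lemma ContTNorm.mul_one' (t : ContTNorm) {x : ℝ} (hx : x ∈ I01) : t.mul x 1 = x := by
  rw [t.comm x hx 1 h1I, t.one_mul' x hx]

lemma ContTNorm.zero_mul' (t : ContTNorm) {x : ℝ} (hx : x ∈ I01) : t.mul 0 x = 0 := by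
  rw [t.comm 0 h0I x hx, t.mul_zero' hx]

lemma mul_le_left (t : ContTNorm) {x y : ℝ} (hx : x ∈ I01) (hy : y ∈ I01) :
    t.mul x y ≤ x := by
  have := t.mono x hx y hy 1 h1I hy.2
  rwa [t.mul_one' hx] at this

lemma eq_one_of_mul_eq_one (t : ContTNorm) {x y : ℝ} (hx : x ∈ I01) (hy : y ∈ I01)
    (h : t.mul x y = 1) : x = 1 ∧ y = 1 := by
  constructor
  · exact le_antisymm hx.2 (h ▸ mul_le_left t hx hy)
  · have : t.mul x y ≤ y := by
      rw [t.comm x hx y hy]; exact mul_le_left t hy hx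
    exact le_antisymm hy.2 (h ▸ this)

lemma resid_one (t : ContTNorm) {y : ℝ} (hy : y ∈ I01) : resid t 1 y = y := by
  have hset : {c | c ∈ I01 ∧ t.mul 1 c ≤ y} = Icc 0 y := by
    ext c
    constructor
    · rintro ⟨hc, hle⟩
      rw [t.one_mul' c hc] at hle
      exact ⟨hc.1, hle⟩
    · rintro ⟨hc0, hcy⟩
      have hc : c ∈ I01 := ⟨hc0, hcy.trans hy.2⟩
      exact ⟨hc, le_of_eq_of_le (t.one_mul' c hc) hcy⟩
  rw [resid, hset, csSup_Icc hy.1]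

lemma continuousOn_mul_left (t : ContTNorm) {x : ℝ} (hx : x ∈ I01) :
    ContinuousOn (fun c => t.mul x c) I01 := by
  have : (fun c => t.mul x c) = (fun p : ℝ × ℝ => t.mul p.1 p.2) ∘ (fun c => (x, c)) := rfl
  rw [this]
  exact t.continuousOn.comp ((continuous_const.prodMk continuous_id).continuousOn)
    (fun c hc => Set.mem_prod.mpr ⟨hx, hc⟩)

lemma resid_mem_set (t : ContTNorm) {x y : ℝ} (hx : x ∈ I01) (hy : y ∈ I01) :
    resid t x y ∈ {c | c ∈ I01 ∧ t.mul x c ≤ y} := by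
  have hset : {c | c ∈ I01 ∧ t.mul x c ≤ y} = I01 ∩ (fun c => t.mul x c) ⁻¹' Iic y := rfl
  have hclosed : IsClosed {c | c ∈ I01 ∧ t.mul x c ≤ y} := by
    rw [hset]
    exact (continuousOn_mul_left t hx).preimage_isClosed_of_isClosed isClosed_Icc isClosed_Iic
  have hne : ({c | c ∈ I01 ∧ t.mul x c ≤ y}).Nonempty :=
    ⟨0, h0I, by rw [t.mul_zero' hx]; exact hy.1⟩
  have hbdd : BddAbove {c | c ∈ I01 ∧ t.mul x c ≤ y} := ⟨1, fun c hc => hc.1.2⟩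
  exact hclosed.csSup_mem hne hbdd

lemma le_of_resid_eq_one (t : ContTNorm) {x y : ℝ} (hx : x ∈ I01) (hy : y ∈ I01)
    (h : resid t x y = 1) : x ≤ y := by
  have hm := resid_mem_set t hx hy
  rw [h] at hm
  have := hm.2
  rwa [t.mul_one' hx] at this

lemma eval_mem (t : ContTNorm) (T : TruthAlg t) {v : ℕ → ℝ} (hv : IsValuation t T v) :
    ∀ α, eval t v α ∈ T.carrier
  | .var i => hv i
  | .bot => T.zero_mem
  | .conj a b => T.mul_mem _ (eval_mem t T hv a) _ (eval_mem t T hv b)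
  | .impl a b => T.resid_mem _ (eval_mem t T hv a) _ (eval_mem t T hv b)

lemma mem_I01_of_bool {x : ℝ} (hx : x ∈ ({0,1} : Set ℝ)) : x ∈ I01 := by
  rcases hx with rfl | rfl
  · exact h0I
  · exact h1I

lemma mul_bool (t : ContTNorm) {x y : ℝ} (hx : x ∈ ({0,1} : Set ℝ))
    (hy : y ∈ ({0,1} : Set ℝ)) : t.mul x y = min x y := by
  rcases hx with rfl | rfl <;> rcases hy with rfl | rfl
  · rw [t.mul_zero' h0I]; norm_num
  · rw [t.zero_mul' h1I]; norm_num
  · rw [t.mul_zero' h1I]; norm_num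
  · rw [t.one_mul' 1 h1I]; norm_num

lemma resid_bool (t : ContTNorm) {x y : ℝ} (hx : x ∈ ({0,1} : Set ℝ))
    (hy : y ∈ ({0,1} : Set ℝ)) : resid t x y = if x ≤ y then 1 else 0 := by
  rcases hx with rfl | rfl <;> rcases hy with rfl | rfl
  · rw [resid_eq_one_of_le t h0I h0I le_rfl]; norm_num
  · rw [resid_eq_one_of_le t h0I h1I zero_le_one]; norm_num
  · rw [resid_one_zero t]; norm_num
  · rw [resid_eq_one_of_le t h1I h1I le_rfl]; norm_num

lemma bool_eval (t t' : ContTNorm) {v : ℕ → ℝ} (hv : ∀ i, v i ∈ ({0,1} : Set ℝ)) :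
    ∀ α, eval t v α ∈ ({0,1} : Set ℝ) ∧ eval t v α = eval t' v α := by
  intro α
  induction α with
  | var i => exact ⟨hv i, rfl⟩
  | bot => exact ⟨Or.inl rfl, rfl⟩
  | conj a b iha ihb =>
    obtain ⟨ha, hae⟩ := iha
    obtain ⟨hb, hbe⟩ := ihb
    constructor
    · show t.mul (eval t v a) (eval t v b) ∈ ({0,1} : Set ℝ)
      rw [mul_bool t ha hb]
      rcases ha with h | h <;> rcases hb with h' | h' <;> rw [h, h'] <;> norm_num
    · show t.mul (eval t v a) (eval t v b) = t'.mul (eval t' v a) (eval t' v b)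
      rw [← hae, ← hbe, mul_bool t ha hb, mul_bool t' ha hb]
  | impl a b iha ihb =>
    obtain ⟨ha, hae⟩ := iha
    obtain ⟨hb, hbe⟩ := ihb
    constructor
    · show resid t (eval t v a) (eval t v b) ∈ ({0,1} : Set ℝ)
      rw [resid_bool t ha hb]
      split_ifs <;> norm_num
    · show resid t (eval t v a) (eval t v b) = resid t' (eval t' v a) (eval t' v b)
      rw [← hae, ← hbe, resid_bool t ha hb, resid_bool t' ha hb]

lemma taut_eq_classical (t : ContTNorm) (T : TruthAlg t) (hT : T.carrier = {0,1}) :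
    Taut t T = ClassicalLogic := by
  ext α
  simp only [Taut, ClassicalLogic, Set.mem_setOf_eq]
  constructor
  · intro h v hv
    have hv' : ∀ i, v i ∈ ({0,1} : Set ℝ) := hv
    have := h v (fun i => by rw [hT]; exact hv' i)
    rw [← (bool_eval t minT hv' α).2]
    exact this
  · intro h v hv
    have hv' : ∀ i, v i ∈ ({0,1} : Set ℝ) := fun i => hT ▸ hv i
    rw [(bool_eval t minT hv' α).2]
    exact h v hv'

/-- The magic formula `((¬¬X) → X) & (X → X & X)`. -/
def phi : Formula :=
  .conj (.impl (.impl (.impl (.var 0) .bot) .bot) (.var 0))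
        (.impl (.var 0) (.conj (.var 0) (.var 0)))

lemma phi_eval_one (t : ContTNorm) (v : ℕ → ℝ) (hv0 : v 0 ∈ ({0,1} : Set ℝ)) :
    eval t v phi = 1 := by
  have r00 : resid t 0 0 = 1 := resid_eq_one_of_le t h0I h0I le_rfl
  have r10 : resid t 1 0 = 0 := resid_one_zero t
  have r11 : resid t 1 1 = 1 := resid_eq_one_of_le t h1I h1I le_rfl
  have m00 : t.mul 0 0 = 0 := t.mul_zero' h0I
  have m11 : t.mul 1 1 = 1 := t.one_mul' 1 h1I
  show t.mul (resid t (resid t (resid t (v 0) 0) 0) (v 0))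
      (resid t (v 0) (t.mul (v 0) (v 0))) = 1
  rcases hv0 with h | h <;> rw [h]
  · rw [m00, r00, r10, r00]; exact m11
  · rw [m11, r10, r00, r11]; exact m11

lemma phi_classical : phi ∈ ClassicalLogic :=
  fun v hv => phi_eval_one minT v (hv 0)

lemma idem_of_le (t : ContTNorm) {a : ℝ} (ha : a ∈ I01) (h : a ≤ t.mul a a) :
    t.mul a a = a := le_antisymm (mul_le_left t ha ha) h

lemma mul_pos_of_idem (t : ContTNorm) {a : ℝ} (ha : a ∈ I01) (ha0 : 0 < a)
    (hid : t.mul a a = a) {c : ℝ} (hc : c ∈ I01) (hc0 : 0 < c) : 0 < t.mul a c := by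
  rcases le_total a c with h | h
  · have hmono : t.mul a a ≤ t.mul a c := t.mono a ha a ha c hc h
    rw [hid] at hmono
    exact lt_of_lt_of_le ha0 hmono
  · obtain ⟨d, hd, hfd⟩ : ∃ d ∈ Icc (0:ℝ) 1, t.mul a d = c := by
      have hco : ContinuousOn (fun d => t.mul a d) (Icc 0 1) := continuousOn_mul_left t ha
      have h0 : t.mul a 0 = 0 := t.mul_zero' ha
      have h1 : t.mul a 1 = a := t.mul_one' ha
      have hsub := intermediate_value_Icc (zero_le_one (α := ℝ)) hco
      rw [h0, h1] at hsub
      exact hsub ⟨hc.1, h⟩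
    have hkey : t.mul a c = c := by
      rw [← hfd, ← t.assoc a ha a ha d hd, hid]
    rw [hkey]
    exact hc0

lemma resid_a_zero (t : ContTNorm) {a : ℝ} (ha : a ∈ I01) (ha0 : 0 < a)
    (hid : t.mul a a = a) : resid t a 0 = 0 := by
  have hset : {c | c ∈ I01 ∧ t.mul a c ≤ 0} = {0} := by
    ext c
    constructor
    · rintro ⟨hc, hle⟩
      by_contra hne
      have hc0 : 0 < c := lt_of_le_of_ne hc.1 (fun h => hne (by simpa using h.symm))
      exact absurd hle (not_le.mpr (mul_pos_of_idem t ha ha0 hid hc hc0))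
    · rintro rfl
      exact ⟨h0I, le_of_eq (t.mul_zero' ha)⟩
  rw [resid, hset, csSup_singleton]

/-- An algebra inducing classical logic is the two-element algebra. -/
lemma carrier_of_classical (t : ContTNorm) (T : TruthAlg t)
    (h : Taut t T = ClassicalLogic) : T.carrier = {0,1} := by
  apply Set.eq_of_subset_of_subset
  · intro a haT
    by_contra hab
    simp only [Set.mem_insert_iff, Set.mem_singleton_iff, not_or] at hab
    have haI := T.subset haT
    have ha0 : 0 < a := lt_of_le_of_ne haI.1 (Ne.symm hab.1)
    have ha1 : a < 1 := lt_of_le_of_ne haI.2 hab.2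
    have hphi : phi ∈ Taut t T := by rw [h]; exact phi_classical
    have he := hphi (fun _ => a) (fun _ => haT)
    have he' : t.mul (resid t (resid t (resid t a 0) 0) a) (resid t a (t.mul a a)) = 1 := he
    have hmaa : t.mul a a ∈ I01 := t.maps_to a haI a haI
    have hA : resid t (resid t (resid t a 0) 0) a ∈ I01 :=
      resid_mem_I01 t (resid_mem_I01 t (resid_mem_I01 t haI h0I) h0I) haI
    have hB : resid t a (t.mul a a) ∈ I01 := resid_mem_I01 t haI hmaa
    obtain ⟨h1', h2'⟩ := eq_one_of_mul_eq_one t hA hB he'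
    have hle : a ≤ t.mul a a := le_of_resid_eq_one t haI hmaa h2'
    have hid := idem_of_le t haI hle
    rw [resid_a_zero t haI ha0 hid, resid_eq_one_of_le t h0I h0I le_rfl,
      resid_one t haI] at h1'
    exact absurd h1' (ne_of_lt ha1)
  · rintro x (rfl | rfl)
    · exact T.zero_mem
    · exact T.one_mem

/-- On the three-element Gödel chain `{0, a, 1}` (with `a` idempotent), evaluation under
the constant-`a` assignment and the constant-`1` assignment are linked. -/
lemma tri_eval (t : ContTNorm) {a : ℝ} (haI : a ∈ I01) (ha0 : 0 < a) (ha1 : a < 1)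
    (hid : t.mul a a = a) :
    ∀ α : Formula,
      (eval t (fun _ => a) α = 0 ∧ eval t (fun _ => 1) α = 0) ∨
      (eval t (fun _ => a) α = a ∧ eval t (fun _ => 1) α = 1) ∨
      (eval t (fun _ => a) α = 1 ∧ eval t (fun _ => 1) α = 1) := by
  have m00 : t.mul 0 0 = 0 := t.mul_zero' h0I
  have m0a : t.mul 0 a = 0 := t.zero_mul' haI
  have m01 : t.mul 0 1 = 0 := t.zero_mul' h1I
  have ma0 : t.mul a 0 = 0 := t.mul_zero' haI
  have m10 : t.mul 1 0 = 0 := t.mul_zero' h1I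
  have ma1 : t.mul a 1 = a := t.mul_one' haI
  have m1a : t.mul 1 a = a := t.one_mul' a haI
  have m11 : t.mul 1 1 = 1 := t.one_mul' 1 h1I
  have r00 : resid t 0 0 = 1 := resid_eq_one_of_le t h0I h0I le_rfl
  have r0a : resid t 0 a = 1 := resid_eq_one_of_le t h0I haI ha0.le
  have r01 : resid t 0 1 = 1 := resid_eq_one_of_le t h0I h1I zero_le_one
  have raa : resid t a a = 1 := resid_eq_one_of_le t haI haI le_rfl
  have ra1 : resid t a 1 = 1 := resid_eq_one_of_le t haI h1I haI.2
  have r11 : resid t 1 1 = 1 := resid_eq_one_of_le t h1I h1I le_rfl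
  have ra0 : resid t a 0 = 0 := resid_a_zero t haI ha0 hid
  have r10 : resid t 1 0 = 0 := resid_one_zero t
  have r1a : resid t 1 a = a := resid_one t haI
  intro α
  induction α with
  | var i => exact Or.inr (Or.inl ⟨rfl, rfl⟩)
  | bot => exact Or.inl ⟨rfl, rfl⟩
  | conj p q ihp ihq =>
    rcases ihp with ⟨hp, hp'⟩ | ⟨hp, hp'⟩ | ⟨hp, hp'⟩ <;>
      rcases ihq with ⟨hq, hq'⟩ | ⟨hq, hq'⟩ | ⟨hq, hq'⟩ <;>
      simp only [eval, hp, hp', hq, hq', m00, m0a, m01, ma0, m10, hid, ma1, m1a, m11] <;>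
      first
        | exact Or.inl ⟨rfl, rfl⟩
        | exact Or.inr (Or.inl ⟨rfl, rfl⟩)
        | exact Or.inr (Or.inr ⟨rfl, rfl⟩)
        | tauto
  | impl p q ihp ihq =>
    rcases ihp with ⟨hp, hp'⟩ | ⟨hp, hp'⟩ | ⟨hp, hp'⟩ <;>
      rcases ihq with ⟨hq, hq'⟩ | ⟨hq, hq'⟩ | ⟨hq, hq'⟩ <;>
      simp only [eval, hp, hp', hq, hq', r00, r0a, r01, raa, ra1, r11, ra0, r10, r1a] <;>
      first
        | exact Or.inl ⟨rfl, rfl⟩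
        | exact Or.inr (Or.inl ⟨rfl, rfl⟩)
        | exact Or.inr (Or.inr ⟨rfl, rfl⟩)
        | tauto

/-- A real-valued logic satisfies both P1 and P2 iff it is classical logic, iff the
two-element algebra is the unique algebra of truth values inducing it. -/
theorem P1_and_P2_iff_classical (L : Set Formula)
    (hL : ∃ (t : ContTNorm) (T : TruthAlg t), Taut t T = L) :
    ((P1 L ∧ P2 L) ↔ L = ClassicalLogic) ∧
    (L = ClassicalLogic ↔
      ∀ (t' : ContTNorm) (T' : TruthAlg t'), Taut t' T' = L → T'.carrier = {0, 1}) := by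
  obtain ⟨t0, T0, hT0⟩ := hL
  have second : (L = ClassicalLogic ↔
      ∀ (t' : ContTNorm) (T' : TruthAlg t'), Taut t' T' = L → T'.carrier = {0, 1}) := by
    constructor
    · intro hcl t' T' h
      exact carrier_of_classical t' T' (h.trans hcl)
    · intro h
      rw [← hT0]
      exact taut_eq_classical t0 T0 (h t0 T0 hT0)
  refine ⟨?_, second⟩
  constructor
  · rintro ⟨hp1, hp2⟩
    have hcar : T0.carrier ⊆ {0, 1} := by
      intro a haT
      by_contra hab
      simp only [Set.mem_insert_iff, Set.mem_singleton_iff, not_or] at hab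
      have haI := T0.subset haT
      have ha0 : 0 < a := lt_of_le_of_ne haI.1 (Ne.symm hab.1)
      have ha1 : a < 1 := lt_of_le_of_ne haI.2 hab.2
      by_cases hle : a ≤ t0.mul a a
      · -- idempotent case : use P2 with the constant-a and constant-1 valuations
        have hid := idem_of_le t0 haI hle
        obtain ⟨α, hva, hwa⟩ := hp2 t0 T0 hT0 (fun _ => a) (fun _ => 1)
          (fun _ => haT) (fun _ => T0.one_mem)
          (fun h => absurd (congrFun h 0) (ne_of_lt ha1))
        rcases tri_eval t0 haI ha0 ha1 hid α with ⟨h1, _⟩ | ⟨_, h2⟩ | ⟨_, h2⟩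
        · rw [h1] at hva; exact lt_irrefl 0 hva
        · rw [h2] at hwa; exact one_ne_zero hwa
        · rw [h2] at hwa; exact one_ne_zero hwa
      · -- non-idempotent case : use P1 with α = X, β = X & X
        have hiff : Formula.iff (.var 0) (.conj (.var 0) (.var 0)) ∈ L := by
          rw [hp1 t0 T0 hT0 (.var 0) (.conj (.var 0) (.var 0))]
          intro v hv
          have hvI : v 0 ∈ I01 := T0.subset (hv 0)
          constructor
          · intro h1
            have h1' : v 0 = 1 := h1
            show t0.mul (v 0) (v 0) = 1
            rw [h1']
            exact t0.one_mul' 1 h1I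
          · intro h1
            have h1' : t0.mul (v 0) (v 0) = 1 := h1
            exact (eq_one_of_mul_eq_one t0 hvI hvI h1').1
        rw [← hT0] at hiff
        have he := hiff (fun _ => a) (fun _ => haT)
        have he' : t0.mul (resid t0 a (t0.mul a a)) (resid t0 (t0.mul a a) a) = 1 := he
        have hmaa : t0.mul a a ∈ I01 := t0.maps_to a haI a haI
        obtain ⟨hr1, _⟩ := eq_one_of_mul_eq_one t0 (resid_mem_I01 t0 haI hmaa)
          (resid_mem_I01 t0 hmaa haI) he'
        exact hle (le_of_resid_eq_one t0 haI hmaa hr1)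
    have hcar' : T0.carrier = {0, 1} :=
      Set.eq_of_subset_of_subset hcar
        (by rintro x (rfl | rfl); exacts [T0.zero_mem, T0.one_mem])
    rw [← hT0]
    exact taut_eq_classical t0 T0 hcar'
  · intro hcl
    constructor
    · -- P1
      intro t T hTaut α β
      have hT : T.carrier = {0, 1} := carrier_of_classical t T (hTaut.trans hcl)
      have hbool : ∀ γ, ∀ v, IsValuation t T v → eval t v γ ∈ ({0,1} : Set ℝ) :=
        fun γ v hv => hT ▸ eval_mem t T hv γ
      constructor
      · intro hiff v hv
        rw [← hTaut] at hiff
        have h := hiff v hv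
        have h' : t.mul (resid t (eval t v α) (eval t v β))
            (resid t (eval t v β) (eval t v α)) = 1 := h
        have hα : eval t v α ∈ I01 := T.subset (eval_mem t T hv α)
        have hβ : eval t v β ∈ I01 := T.subset (eval_mem t T hv β)
        obtain ⟨h1, h2⟩ := eq_one_of_mul_eq_one t (resid_mem_I01 t hα hβ)
          (resid_mem_I01 t hβ hα) h'
        have heq : eval t v α = eval t v β :=
          le_antisymm (le_of_resid_eq_one t hα hβ h1) (le_of_resid_eq_one t hβ hα h2)
        rw [heq]
      · intro hall
        rw [← hTaut]
        intro v hv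
        have hq := hall v hv
        have heq : eval t v α = eval t v β := by
          rcases hbool α v hv with h | h <;> rcases hbool β v hv with h' | h'
          · rw [h, h']
          · exfalso; rw [h, h'] at hq; norm_num at hq
          · exfalso; rw [h, h'] at hq; norm_num at hq
          · rw [h, h']
        have hαI : eval t v α ∈ I01 := T.subset (eval_mem t T hv α)
        show t.mul (resid t (eval t v α) (eval t v β))
            (resid t (eval t v β) (eval t v α)) = 1
        rw [← heq, resid_eq_one_of_le t hαI hαI le_rfl]
        exact t.one_mul' 1 h1I
    · -- P2
      intro t T hTaut v w hvv hww hne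
      have hT : T.carrier = {0, 1} := carrier_of_classical t T (hTaut.trans hcl)
      obtain ⟨i, hi⟩ : ∃ i, v i ≠ w i := by
        by_contra h
        push_neg at h
        exact hne (funext h)
      have hvi : v i ∈ ({0,1} : Set ℝ) := hT ▸ hvv i
      have hwi : w i ∈ ({0,1} : Set ℝ) := hT ▸ hww i
      rcases hvi with hv0 | hv1 <;> rcases hwi with hw0 | hw1
      · exact absurd (hv0.trans hw0.symm) hi
      · -- v i = 0, w i = 1 : take ¬ (var i)
        refine ⟨.impl (.var i) .bot, ?_, ?_⟩
        · show (0:ℝ) < resid t (v i) 0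
          rw [hv0, resid_eq_one_of_le t h0I h0I le_rfl]
          exact zero_lt_one
        · show resid t (w i) 0 = 0
          rw [hw1]
          exact resid_one_zero t
      · exact ⟨.var i, by show (0:ℝ) < v i; rw [hv1]; exact zero_lt_one,
          by show w i = 0; exact hw0⟩
      · exact absurd (hv1.trans hw1.symm) hi

end
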